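/- For every d ∈ {1,2,3} there exists a constant C > 0 such that for all κ > 0, all x, y ∈ ℝ^d and all t > 0, the gradient in x of the d-dimensional Mehler kernel satisfies |∇_x G_κ^{(d)}(x,y;t,1)| ≤ C · √κ · √(coth(κt/2)) · G_κ^{(d)}(x,y;t,2), where |·| is the Euclidean norm of the gradient vector. -/

import Mathlib

open Real

/-- The generalized d-dimensional Mehler kernel on Euclidean space.
Here `cosh/sinh` plays the role of `coth`. -/
noncomputable def mehlerGE (d : ℕ) (κ t γ : ℝ) (x y : EuclideanSpace ℝ (Fin d)) : ℝ :=
  (κ / (2 * Real.pi * Real.sinh (κ * t))) ^ ((d : ℝ) / 2) *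
    ∏ j, Real.exp (-(κ / (4 * γ)) * ((x j + y j) ^ 2 * Real.tanh (κ * t / 2) +
      (x j - y j) ^ 2 * (Real.cosh (κ * t / 2) / Real.sinh (κ * t / 2))))

/-- Scalar inequality: `(κ/2) w α e^{-κ w² α/8} ≤ √2 √κ √α` for `w ≥ 0`. -/
lemma mehler_key_scalar (κ α w : ℝ) (hκ : 0 < κ) (hα : 0 ≤ α) (hw : 0 ≤ w) :
    κ / 2 * (w * α) * Real.exp (-(κ / 8) * (w ^ 2 * α)) ≤
      Real.sqrt 2 * (Real.sqrt κ * Real.sqrt α) := by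
  have hs2 : Real.sqrt (κ * α) ^ 2 = κ * α := Real.sq_sqrt (by positivity)
  set s := Real.sqrt (κ * α) with hs
  have hsκα : Real.sqrt κ * Real.sqrt α = s := (Real.sqrt_mul hκ.le α).symm
  have hsnn : 0 ≤ s := Real.sqrt_nonneg _
  have h2 : (0:ℝ) ≤ Real.sqrt 2 := Real.sqrt_nonneg 2
  have h22 : Real.sqrt 2 ^ 2 = 2 := Real.sq_sqrt (by norm_num)
  have hexp : κ / 8 * (w ^ 2 * α) + 1 ≤ Real.exp (κ / 8 * (w ^ 2 * α)) :=
    Real.add_one_le_exp _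
  have h1 : κ / 2 * (w * α) ≤ Real.sqrt 2 * s * Real.exp (κ / 8 * (w ^ 2 * α)) := by
    have hid : Real.sqrt 2 * s * (κ / 8 * (w ^ 2 * α) + 1) - κ / 2 * (w * α) =
        Real.sqrt 2 * s / 8 * (s * w - Real.sqrt 2) ^ 2 + 3 / 4 * (Real.sqrt 2 * s) := by
      linear_combination (w / 2 - Real.sqrt 2 * s * w ^ 2 / 8) * hs2 +
        (s ^ 2 * w / 4 - Real.sqrt 2 * s / 8) * h22
    have hpos : (0:ℝ) ≤ Real.sqrt 2 * s / 8 * (s * w - Real.sqrt 2) ^ 2 +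
        3 / 4 * (Real.sqrt 2 * s) := by positivity
    have hstep : κ / 2 * (w * α) ≤ Real.sqrt 2 * s * (κ / 8 * (w ^ 2 * α) + 1) := by linarith
    exact hstep.trans (by
      have := mul_le_mul_of_nonneg_left hexp (mul_nonneg h2 hsnn)
      linarith)
  rw [hsκα]
  have hepos : (0:ℝ) < Real.exp (-(κ / 8) * (w ^ 2 * α)) := Real.exp_pos _
  have := mul_le_mul_of_nonneg_right h1 hepos.le
  calc κ / 2 * (w * α) * Real.exp (-(κ / 8) * (w ^ 2 * α))
      ≤ Real.sqrt 2 * s * Real.exp (κ / 8 * (w ^ 2 * α)) *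
        Real.exp (-(κ / 8) * (w ^ 2 * α)) := this
    _ = Real.sqrt 2 * s := by
        rw [mul_assoc, ← Real.exp_add]
        ring_nf
        simp [Real.exp_zero]

/-- Per-coordinate bound. -/
lemma mehler_coord_bound (κ T K s r : ℝ) (hκ : 0 < κ) (hT : 0 ≤ T) (hTK : T ≤ K) :
    κ / 2 * |s * T + r * K| * Real.exp (-(κ / 8) * (s ^ 2 * T + r ^ 2 * K)) ≤
      2 * Real.sqrt 2 * Real.sqrt κ * Real.sqrt K := by
  have hK : 0 ≤ K := hT.trans hTK
  have hsplit : Real.exp (-(κ / 8) * (s ^ 2 * T + r ^ 2 * K)) =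
      Real.exp (-(κ / 8) * (s ^ 2 * T)) * Real.exp (-(κ / 8) * (r ^ 2 * K)) := by
    rw [← Real.exp_add]; ring_nf
  have e1 : (0:ℝ) < Real.exp (-(κ / 8) * (s ^ 2 * T)) := Real.exp_pos _
  have e2 : (0:ℝ) < Real.exp (-(κ / 8) * (r ^ 2 * K)) := Real.exp_pos _
  have e1le : Real.exp (-(κ / 8) * (s ^ 2 * T)) ≤ 1 := Real.exp_le_one_iff.mpr (by nlinarith [mul_nonneg (mul_nonneg (by positivity : (0:ℝ) ≤ κ/8) (sq_nonneg s)) hT])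
  have e2le : Real.exp (-(κ / 8) * (r ^ 2 * K)) ≤ 1 := Real.exp_le_one_iff.mpr (by nlinarith [mul_nonneg (mul_nonneg (by positivity : (0:ℝ) ≤ κ/8) (sq_nonneg r)) hK])
  have hsqTK : Real.sqrt T ≤ Real.sqrt K := Real.sqrt_le_sqrt hTK
  have key1 : κ / 2 * (|s| * T) * (Real.exp (-(κ / 8) * (s ^ 2 * T)) *
      Real.exp (-(κ / 8) * (r ^ 2 * K))) ≤ Real.sqrt 2 * (Real.sqrt κ * Real.sqrt K) := by
    have h0 : κ / 2 * (|s| * T) * (Real.exp (-(κ / 8) * (s ^ 2 * T)) *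
        Real.exp (-(κ / 8) * (r ^ 2 * K))) ≤ κ / 2 * (|s| * T) * Real.exp (-(κ / 8) * (s ^ 2 * T)) := by
      have hnn : (0:ℝ) ≤ κ / 2 * (|s| * T) * Real.exp (-(κ / 8) * (s ^ 2 * T)) := by positivity
      nlinarith
    have hks : κ / 2 * (|s| * T) * Real.exp (-(κ / 8) * (s ^ 2 * T)) ≤
        Real.sqrt 2 * (Real.sqrt κ * Real.sqrt T) := by
      simpa [sq_abs] using mehler_key_scalar κ T |s| hκ hT (abs_nonneg s)
    refine h0.trans (hks.trans ?_)
    have := mul_le_mul_of_nonneg_left hsqTK (mul_nonneg (Real.sqrt_nonneg 2) (Real.sqrt_nonneg κ))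
    calc Real.sqrt 2 * (Real.sqrt κ * Real.sqrt T) = Real.sqrt 2 * Real.sqrt κ * Real.sqrt T := by ring
      _ ≤ Real.sqrt 2 * Real.sqrt κ * Real.sqrt K := this
      _ = Real.sqrt 2 * (Real.sqrt κ * Real.sqrt K) := by ring
  have key2 : κ / 2 * (|r| * K) * (Real.exp (-(κ / 8) * (s ^ 2 * T)) *
      Real.exp (-(κ / 8) * (r ^ 2 * K))) ≤ Real.sqrt 2 * (Real.sqrt κ * Real.sqrt K) := by
    have h0 : κ / 2 * (|r| * K) * (Real.exp (-(κ / 8) * (s ^ 2 * T)) *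
        Real.exp (-(κ / 8) * (r ^ 2 * K))) ≤ κ / 2 * (|r| * K) * Real.exp (-(κ / 8) * (r ^ 2 * K)) := by
      have hnn : (0:ℝ) ≤ κ / 2 * (|r| * K) * Real.exp (-(κ / 8) * (r ^ 2 * K)) := by positivity
      nlinarith
    have hks : κ / 2 * (|r| * K) * Real.exp (-(κ / 8) * (r ^ 2 * K)) ≤
        Real.sqrt 2 * (Real.sqrt κ * Real.sqrt K) := by
      simpa [sq_abs] using mehler_key_scalar κ K |r| hκ hK (abs_nonneg r)
    exact h0.trans hks
  have habs : |s * T + r * K| ≤ |s| * T + |r| * K := by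
    calc |s * T + r * K| ≤ |s * T| + |r * K| := abs_add_le _ _
      _ = |s| * T + |r| * K := by rw [abs_mul, abs_mul, abs_of_nonneg hT, abs_of_nonneg hK]
  rw [hsplit]
  have hmul : κ / 2 * |s * T + r * K| * (Real.exp (-(κ / 8) * (s ^ 2 * T)) *
      Real.exp (-(κ / 8) * (r ^ 2 * K))) ≤
      κ / 2 * (|s| * T + |r| * K) * (Real.exp (-(κ / 8) * (s ^ 2 * T)) *
      Real.exp (-(κ / 8) * (r ^ 2 * K))) := by
    have := mul_le_mul_of_nonneg_left habs (by positivity : (0:ℝ) ≤ κ / 2)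
    nlinarith [mul_pos e1 e2]
  refine hmul.trans ?_
  nlinarith [key1, key2]

lemma euclidean_abs_apply_le_norm {d : ℕ} (v : EuclideanSpace ℝ (Fin d)) (j : Fin d) :
    |v j| ≤ ‖v‖ := by
  rw [EuclideanSpace.norm_eq]
  have : |v j| = Real.sqrt (‖v j‖ ^ 2) := by
    rw [Real.sqrt_sq_eq_abs]; simp
  rw [this]
  apply Real.sqrt_le_sqrt
  exact Finset.single_le_sum (f := fun i => ‖v i‖ ^ 2) (fun i _ => by positivity) (Finset.mem_univ j)

lemma euclidean_norm_proj_le {d : ℕ} (j : Fin d) :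
    ‖(EuclideanSpace.proj j : EuclideanSpace ℝ (Fin d) →L[ℝ] ℝ)‖ ≤ 1 := by
  refine ContinuousLinearMap.opNorm_le_bound _ zero_le_one (fun v => ?_)
  simpa using euclidean_abs_apply_le_norm v j

lemma mehler_hasFDerivAt (d : ℕ) (A κ T K : ℝ) (y x : EuclideanSpace ℝ (Fin d)) :
    HasFDerivAt (fun x' : EuclideanSpace ℝ (Fin d) =>
        A * Real.exp (∑ j, -(κ / 4) * ((x' j + y j) ^ 2 * T + (x' j - y j) ^ 2 * K)))
      ((A * Real.exp (∑ j, -(κ / 4) * ((x j + y j) ^ 2 * T + (x j - y j) ^ 2 * K))) •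
        (∑ j, (-(κ / 2) * ((x j + y j) * T + (x j - y j) * K)) •
          (EuclideanSpace.proj j : EuclideanSpace ℝ (Fin d) →L[ℝ] ℝ))) x := by
  have hQ : HasFDerivAt (fun x' : EuclideanSpace ℝ (Fin d) =>
      ∑ j, -(κ / 4) * ((x' j + y j) ^ 2 * T + (x' j - y j) ^ 2 * K))
      (∑ j, (-(κ / 2) * ((x j + y j) * T + (x j - y j) * K)) •
        (EuclideanSpace.proj j : EuclideanSpace ℝ (Fin d) →L[ℝ] ℝ)) x := by
    refine HasFDerivAt.fun_sum (fun j _ => ?_)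
    have h1 : HasDerivAt (fun u : ℝ => -(κ / 4) * ((u + y j) ^ 2 * T + (u - y j) ^ 2 * K))
        (-(κ / 2) * ((x j + y j) * T + (x j - y j) * K)) (x j) := by
      have := ((((hasDerivAt_id (x j)).add_const (y j)).pow 2).mul_const T |>.add
        ((((hasDerivAt_id (x j)).sub_const (y j)).pow 2).mul_const K)).const_mul (-(κ / 4))
      refine this.congr_deriv ?_
      norm_num
      try ring
    have hproj : HasFDerivAt (fun v : EuclideanSpace ℝ (Fin d) => v j)
        (EuclideanSpace.proj j : EuclideanSpace ℝ (Fin d) →L[ℝ] ℝ) x := by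
      have h := (EuclideanSpace.proj j : EuclideanSpace ℝ (Fin d) →L[ℝ] ℝ).hasFDerivAt (x := x)
      exact h
    exact (by have h3 := h1.comp_hasFDerivAt x hproj; exact h3)
  exact (hQ.exp.const_mul A).congr_fderiv (by rw [smul_smul])

set_option maxHeartbeats 1000000 in
set_option synthInstance.maxHeartbeats 400000 in
/-- Gradient estimate for the Mehler kernel. -/
theorem mehler_gradient_bound (d : ℕ) (hd : d = 1 ∨ d = 2 ∨ d = 3) :
    ∃ C > 0, ∀ κ > (0 : ℝ), ∀ x y : EuclideanSpace ℝ (Fin d), ∀ t > (0 : ℝ),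
      ‖gradient (fun x' : EuclideanSpace ℝ (Fin d) => mehlerGE d κ t 1 x' y) x‖ ≤
        C * Real.sqrt κ *
          Real.sqrt (Real.cosh (κ * t / 2) / Real.sinh (κ * t / 2)) *
            mehlerGE d κ t 2 x y := by
  refine ⟨9, by norm_num, ?_⟩
  intro κ hκ x y t ht
  have hkt2 : 0 < κ * t / 2 := by positivity
  have hsinh : 0 < Real.sinh (κ * t / 2) := Real.sinh_pos_iff.mpr hkt2
  have hsinh' : 0 < Real.sinh (κ * t) := Real.sinh_pos_iff.mpr (by positivity)
  have hcosh : 0 < Real.cosh (κ * t / 2) := Real.cosh_pos _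
  set T := Real.tanh (κ * t / 2) with hTdef
  set K := Real.cosh (κ * t / 2) / Real.sinh (κ * t / 2) with hKdef
  have hT : 0 ≤ T := by rw [hTdef, Real.tanh_eq_sinh_div_cosh]; positivity
  have hK : 0 < K := div_pos hcosh hsinh
  have hTK : T ≤ K := by
    rw [hTdef, hKdef, Real.tanh_eq_sinh_div_cosh, div_le_div_iff₀ hcosh hsinh]
    nlinarith [Real.sinh_lt_cosh (κ * t / 2), hsinh]
  set A := (κ / (2 * Real.pi * Real.sinh (κ * t))) ^ ((d : ℝ) / 2) with hAdef
  have hA : 0 < A := Real.rpow_pos_of_pos (by positivity) _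
  set Qx := ∑ j, -(κ / 4) * ((x j + y j) ^ 2 * T + (x j - y j) ^ 2 * K) with hQdef
  set Hx := ∑ j, -(κ / 8) * ((x j + y j) ^ 2 * T + (x j - y j) ^ 2 * K) with hHdef
  -- rewrite the Mehler kernel as A * exp of a sum
  have hfun : (fun x' : EuclideanSpace ℝ (Fin d) => mehlerGE d κ t 1 x' y) =
      (fun x' : EuclideanSpace ℝ (Fin d) =>
        A * Real.exp (∑ j, -(κ / 4) * ((x' j + y j) ^ 2 * T + (x' j - y j) ^ 2 * K))) := by
    funext x'
    rw [hAdef, hTdef, hKdef]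
    simp only [mehlerGE]
    rw [← Real.exp_sum]
    congr 2
    exact Finset.sum_congr rfl (fun j _ => by norm_num)
  have hG2 : mehlerGE d κ t 2 x y = A * Real.exp Hx := by
    rw [hHdef, hAdef, hTdef, hKdef]
    simp only [mehlerGE]
    rw [← Real.exp_sum]
    congr 2
    refine Finset.sum_congr rfl (fun j _ => ?_)
    ring_nf
  have hQH : Real.exp Qx = Real.exp Hx * Real.exp Hx := by
    rw [← Real.exp_add, hQdef, hHdef, ← Finset.sum_add_distrib]
    congr 1
    exact Finset.sum_congr rfl (fun j _ => by ring)
  -- the derivative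
  have hder := mehler_hasFDerivAt d A κ T K y x
  rw [← hfun] at hder
  have hgradnorm : ‖gradient (fun x' : EuclideanSpace ℝ (Fin d) => mehlerGE d κ t 1 x' y) x‖ =
      ‖fderiv ℝ (fun x' : EuclideanSpace ℝ (Fin d) => mehlerGE d κ t 1 x' y) x‖ := by
    unfold gradient
    exact LinearIsometryEquiv.norm_map _ _
  rw [hgradnorm, hder.fderiv]
  set c : Fin d → ℝ := fun j => -(κ / 2) * ((x j + y j) * T + (x j - y j) * K) with hcdef
  set D := ∑ j, c j • (EuclideanSpace.proj j : EuclideanSpace ℝ (Fin d) →L[ℝ] ℝ) with hDdef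
  have hDnorm : ‖D‖ ≤ ∑ j, |c j| := by
    refine (norm_sum_le _ _).trans (Finset.sum_le_sum (fun j _ => ?_))
    refine (ContinuousLinearMap.opNorm_smul_le (c j)
      (EuclideanSpace.proj j : EuclideanSpace ℝ (Fin d) →L[ℝ] ℝ)).trans ?_
    calc ‖c j‖ * ‖(EuclideanSpace.proj j : EuclideanSpace ℝ (Fin d) →L[ℝ] ℝ)‖
        ≤ ‖c j‖ * 1 :=
          mul_le_mul_of_nonneg_left (euclidean_norm_proj_le j) (norm_nonneg _)
      _ = |c j| := by rw [mul_one, Real.norm_eq_abs]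
  have hexpQ : 0 < Real.exp Qx := Real.exp_pos _
  have hexpH : 0 < Real.exp Hx := Real.exp_pos _
  -- per-coordinate bound
  have hcoord : ∀ j : Fin d, |c j| * Real.exp Hx ≤ 2 * Real.sqrt 2 * Real.sqrt κ * Real.sqrt K := by
    intro j
    have hHle : Hx ≤ -(κ / 8) * ((x j + y j) ^ 2 * T + (x j - y j) ^ 2 * K) := by
      have h1 : ∀ i : Fin d, (0:ℝ) ≤ -(-(κ / 8) * ((x i + y i) ^ 2 * T + (x i - y i) ^ 2 * K)) := by
        intro i
        have : (0:ℝ) ≤ κ / 8 * ((x i + y i) ^ 2 * T + (x i - y i) ^ 2 * K) := by positivity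
        linarith
      have h2 : -(-(κ / 8) * ((x j + y j) ^ 2 * T + (x j - y j) ^ 2 * K)) ≤
          ∑ i, -(-(κ / 8) * ((x i + y i) ^ 2 * T + (x i - y i) ^ 2 * K)) :=
        Finset.single_le_sum (fun i _ => h1 i) (Finset.mem_univ j)
      rw [Finset.sum_neg_distrib, ← hHdef] at h2
      linarith
    have habs : |c j| = κ / 2 * |(x j + y j) * T + (x j - y j) * K| := by
      rw [hcdef]
      rw [abs_mul, abs_neg, abs_of_pos (by positivity : (0:ℝ) < κ / 2)]
    calc |c j| * Real.exp Hx
        ≤ |c j| * Real.exp (-(κ / 8) * ((x j + y j) ^ 2 * T + (x j - y j) ^ 2 * K)) := by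
          exact mul_le_mul_of_nonneg_left (Real.exp_le_exp.mpr hHle) (abs_nonneg _)
      _ = κ / 2 * |(x j + y j) * T + (x j - y j) * K| *
          Real.exp (-(κ / 8) * ((x j + y j) ^ 2 * T + (x j - y j) ^ 2 * K)) := by rw [habs]
      _ ≤ 2 * Real.sqrt 2 * Real.sqrt κ * Real.sqrt K :=
          mehler_coord_bound κ T K (x j + y j) (x j - y j) hκ hT hTK
  -- assemble
  have hd3 : (d : ℝ) ≤ 3 := by rcases hd with h | h | h <;> rw [h] <;> norm_num
  have hs2le : Real.sqrt 2 ≤ (3:ℝ) / 2 := by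
    rw [show (3:ℝ)/2 = Real.sqrt ((3/2)^2) by rw [Real.sqrt_sq (by norm_num)]]
    exact Real.sqrt_le_sqrt (by norm_num)
  have hKs : 0 ≤ Real.sqrt K := Real.sqrt_nonneg _
  have hκs : 0 ≤ Real.sqrt κ := Real.sqrt_nonneg _
  calc ‖(A * Real.exp Qx) • D‖
      ≤ (A * Real.exp Qx) * ‖D‖ := by
        refine (ContinuousLinearMap.opNorm_smul_le _ _).trans ?_
        rw [Real.norm_eq_abs, abs_of_pos (by positivity)]
    _ ≤ (A * Real.exp Qx) * ∑ j, |c j| :=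
        mul_le_mul_of_nonneg_left hDnorm (by positivity)
    _ = ∑ j, |c j| * Real.exp Hx * (A * Real.exp Hx) := by
        rw [hQH, Finset.mul_sum]
        exact Finset.sum_congr rfl (fun j _ => by ring)
    _ ≤ ∑ _j : Fin d, 2 * Real.sqrt 2 * Real.sqrt κ * Real.sqrt K * (A * Real.exp Hx) := by
        refine Finset.sum_le_sum (fun j _ => ?_)
        exact mul_le_mul_of_nonneg_right (hcoord j) (by positivity)
    _ = (d : ℝ) * (2 * Real.sqrt 2 * Real.sqrt κ * Real.sqrt K * (A * Real.exp Hx)) := by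
        rw [Finset.sum_const, Finset.card_univ, Fintype.card_fin, nsmul_eq_mul]
    _ ≤ 9 * Real.sqrt κ * Real.sqrt K * (A * Real.exp Hx) := by
        have h1 : (d : ℝ) * (2 * Real.sqrt 2) ≤ 9 := by nlinarith [Nat.cast_nonneg (α := ℝ) d]
        have h2 : (0:ℝ) ≤ Real.sqrt κ * Real.sqrt K * (A * Real.exp Hx) := by positivity
        nlinarith [mul_le_mul_of_nonneg_right h1 h2]
    _ = 9 * Real.sqrt κ * Real.sqrt K * mehlerGE d κ t 2 x y := by rw [hG2]
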